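/- If (Z,W) is a centered Gaussian vector in R² with Var(Z)=Var(W)=1 and E(ZW)=r, then for all natural numbers k, l, E[H_k(Z)·H_l(W)] = δ_{k,l}·r^k·k!, where H_n denotes the n-th probabilist's Hermite polynomial (Mehler's formula). -/

import Mathlib

open MeasureTheory ProbabilityTheory

/-- The probabilist's Hermite polynomials, as real functions. -/
noncomputable def hermiteFun : ℕ → ℝ → ℝ
  | 0, _ => 1
  | 1, x => x
  | (n + 2), x => x * hermiteFun (n + 1) x - (n + 1) * hermiteFun n x

open MeasureTheory ProbabilityTheory Polynomial Real Filter
open scoped ENNReal NNReal Topology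

namespace MehlerAux


noncomputable def H (n : ℕ) : ℝ[X] := (Polynomial.hermite n).map (Int.castRingHom ℝ)

lemma H_zero : H 0 = 1 := by simp [H, Polynomial.hermite_zero]

lemma H_one : H 1 = X := by simp [H, Polynomial.hermite_one]

lemma H_succ (n : ℕ) : H (n + 1) = X * H n - derivative (H n) := by
  simp [H, Polynomial.hermite_succ, Polynomial.derivative_map]

lemma derivative_H (n : ℕ) : derivative (H (n + 1)) = C ((n : ℝ) + 1) * H n := by
  induction n with
  | zero => simp [H_one, H_zero]
  | succ m ih =>
    rw [H_succ (m+1), derivative_sub, derivative_mul, derivative_X, ih]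
    rw [H_succ m] -- unused?
    rw [derivative_mul, derivative_C,
      show ((↑(m+1):ℝ) + 1) = ((m:ℝ) + 1) + 1 by push_cast; ring]
    simp only [C_add, C_1]
    ring

lemma H_two_step (n : ℕ) : H (n + 2) = X * H (n + 1) - C ((n : ℝ) + 1) * H n := by
  rw [show n + 2 = (n+1) + 1 from rfl, H_succ (n+1), derivative_H]

lemma hermiteFun_eq' : ∀ n x, (fun n x => (H n).eval x : ℕ → ℝ → ℝ) n x = (H n).eval x :=
  fun _ _ => rfl


noncomputable def φ (x : ℝ) : ℝ := (Real.sqrt (2 * π))⁻¹ * Real.exp (-(1/2) * x ^ 2)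

lemma pdf_eq : gaussianPDFReal 0 1 = φ := by
  funext x
  rw [gaussianPDFReal_def]
  unfold φ
  norm_num
  left; ring

lemma φ_nonneg (x : ℝ) : 0 ≤ φ x := by
  unfold φ; positivity

-- integrability of x^n * exp(-x^2/2)
lemma integrable_pow_exp (n : ℕ) :
    Integrable (fun x : ℝ => x ^ n * Real.exp (-(1/2) * x ^ 2)) volume := by
  have hInt : Integrable (fun x : ℝ =>
      (n.factorial : ℝ) * (Real.exp (1/2) * (Real.exp (-(1/2) * (x - 1) ^ 2)
        + Real.exp (-(1/2) * (x + 1) ^ 2)))) volume := by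
    have h1 : Integrable (fun x : ℝ => Real.exp (-(1/2) * x ^ 2)) volume :=
      integrable_exp_neg_mul_sq (by norm_num)
    have h2 := h1.comp_sub_right (1 : ℝ)
    have h3 := h1.comp_add_right (1 : ℝ)
    exact (((h2.add h3).const_mul _).const_mul _)
  refine hInt.mono' ?_ ?_
  · exact ((continuous_pow n).mul
      (Real.continuous_exp.comp (by continuity))).aestronglyMeasurable
  · filter_upwards with x
    have hx : |x| ^ n ≤ (n.factorial : ℝ) * Real.exp |x| := by
      have := Real.pow_div_factorial_le_exp |x| (abs_nonneg x) n
      rw [div_le_iff₀ (by positivity)] at this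
      linarith [this]
    have hexp : Real.exp |x| ≤ Real.exp x + Real.exp (-x) := by
      rcases abs_cases x with ⟨h, _⟩ | ⟨h, _⟩
      · rw [h]; nlinarith [Real.exp_pos (-x)]
      · rw [h]; nlinarith [Real.exp_pos x]
    have key : ‖x ^ n * Real.exp (-(1/2) * x ^ 2)‖
        ≤ (n.factorial : ℝ) * (Real.exp x + Real.exp (-x)) * Real.exp (-(1/2) * x ^ 2) := by
      rw [norm_mul, Real.norm_eq_abs, Real.norm_eq_abs, abs_pow,
        abs_of_nonneg (Real.exp_pos _).le]
      have h0 : (0:ℝ) ≤ Real.exp (-(1/2) * x ^ 2) := (Real.exp_pos _).le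
      calc |x| ^ n * Real.exp (-(1/2) * x ^ 2)
          ≤ ((n.factorial : ℝ) * Real.exp |x|) * Real.exp (-(1/2) * x ^ 2) :=
            mul_le_mul_of_nonneg_right hx h0
        _ ≤ _ := by
            refine mul_le_mul_of_nonneg_right ?_ h0
            exact mul_le_mul_of_nonneg_left hexp (by positivity)
    refine key.trans (le_of_eq ?_)
    have e1 : Real.exp x * Real.exp (-(1/2) * x ^ 2)
        = Real.exp (1/2) * Real.exp (-(1/2) * (x - 1) ^ 2) := by
      rw [← Real.exp_add, ← Real.exp_add]; congr 1; ring
    have e2 : Real.exp (-x) * Real.exp (-(1/2) * x ^ 2)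
        = Real.exp (1/2) * Real.exp (-(1/2) * (x + 1) ^ 2) := by
      rw [← Real.exp_add, ← Real.exp_add]; congr 1; ring
    calc (n.factorial : ℝ) * (Real.exp x + Real.exp (-x)) * Real.exp (-(1/2) * x ^ 2)
        = (n.factorial : ℝ) * (Real.exp x * Real.exp (-(1/2) * x ^ 2)
            + Real.exp (-x) * Real.exp (-(1/2) * x ^ 2)) := by ring
      _ = _ := by rw [e1, e2]; ring


lemma integrable_poly_exp (p : ℝ[X]) :
    Integrable (fun x : ℝ => p.eval x * Real.exp (-(1/2) * x ^ 2)) volume := by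
  have : (fun x : ℝ => p.eval x * Real.exp (-(1/2) * x ^ 2))
      = fun x : ℝ => ∑ i ∈ Finset.range (p.natDegree + 1),
          p.coeff i * (x ^ i * Real.exp (-(1/2) * x ^ 2)) := by
    funext x
    rw [Polynomial.eval_eq_sum_range, Finset.sum_mul]
    exact Finset.sum_congr rfl fun i _ => by ring
  rw [this]
  exact integrable_finset_sum _ fun i _ => (integrable_pow_exp i).const_mul _

lemma integrable_poly_phi (p : ℝ[X]) :
    Integrable (fun x : ℝ => p.eval x * φ x) volume := by
  have h := (integrable_poly_exp p).const_mul (Real.sqrt (2 * π))⁻¹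
  refine h.congr (Filter.Eventually.of_forall fun x => ?_)
  unfold φ; ring

noncomputable def γ : Measure ℝ := gaussianReal 0 1

instance : IsProbabilityMeasure γ := by unfold γ; infer_instance

lemma γ_eq : γ = volume.withDensity (fun x => ENNReal.ofReal (φ x)) := by
  rw [γ, gaussianReal_of_var_ne_zero 0 one_ne_zero]
  congr 1
  funext x
  rw [gaussianPDF_def, pdf_eq]

lemma integral_γ (f : ℝ → ℝ) : ∫ x, f x ∂γ = ∫ x, φ x * f x := by
  have hφm : Measurable fun x => (φ x).toNNReal := by
    have hc : Continuous φ := continuous_const.mul (Real.continuous_exp.comp (by continuity))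
    exact hc.measurable.real_toNNReal
  have hd : (fun x => ENNReal.ofReal (φ x)) = fun x => ((φ x).toNNReal : ℝ≥0∞) := rfl
  rw [γ_eq, hd, integral_withDensity_eq_integral_smul hφm]
  congr 1; funext x
  rw [NNReal.smul_def, Real.coe_toNNReal _ (φ_nonneg x), smul_eq_mul]


lemma integrable_poly (p : ℝ[X]) : Integrable (fun x => p.eval x) γ := by
  have hφm : AEMeasurable (fun x => (φ x).toNNReal) (volume : Measure ℝ) := by
    have hc : Continuous φ := continuous_const.mul (Real.continuous_exp.comp (by continuity))
    exact hc.measurable.real_toNNReal.aemeasurable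
  have hd : (fun x => ENNReal.ofReal (φ x)) = fun x => ((φ x).toNNReal : ℝ≥0∞) := rfl
  rw [γ_eq, hd, integrable_withDensity_iff_integrable_smul₀ hφm]
  refine (integrable_poly_phi p).congr (Filter.Eventually.of_forall fun x => ?_)
  simp only [NNReal.smul_def, Real.coe_toNNReal _ (φ_nonneg x), smul_eq_mul]
  ring

lemma tendsto_poly_exp_atTop (p : ℝ[X]) :
    Tendsto (fun x => p.eval x * Real.exp (-(1/2) * x ^ 2)) atTop (𝓝 0) := by
  have hlim : Tendsto (fun x => |p.eval x / Real.exp x| * Real.exp (1/2)) atTop (𝓝 0) := by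
    have h := (p.tendsto_div_exp_atTop).abs
    rw [abs_zero] at h
    simpa using h.mul_const (Real.exp (1/2))
  refine squeeze_zero_norm' ?_ hlim
  · filter_upwards with x
    have h1 : Real.exp (x - (1/2) * x ^ 2) ≤ Real.exp (1/2) := by
      apply Real.exp_le_exp.2; nlinarith [sq_nonneg (x - 1)]
    have h2 : |p.eval x| * Real.exp (-(1/2) * x ^ 2)
        = |p.eval x / Real.exp x| * Real.exp (x - (1/2) * x ^ 2) := by
      rw [abs_div, abs_of_pos (Real.exp_pos x), div_mul_eq_mul_div,
        eq_div_iff (Real.exp_pos x).ne']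
      have harg : -(1/2) * x ^ 2 + x = x - (1/2) * x ^ 2 := by ring
      rw [mul_assoc, ← Real.exp_add, harg]
    rw [norm_mul, Real.norm_eq_abs, Real.norm_eq_abs, abs_of_pos (Real.exp_pos _), h2]
    exact mul_le_mul_of_nonneg_left h1 (abs_nonneg _)

lemma tendsto_poly_exp_atBot (p : ℝ[X]) :
    Tendsto (fun x => p.eval x * Real.exp (-(1/2) * x ^ 2)) atBot (𝓝 0) := by
  have h := (tendsto_poly_exp_atTop (p.comp (-X))).comp tendsto_neg_atBot_atTop
  refine h.congr fun x => ?_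
  simp [Polynomial.eval_comp]

lemma tendsto_poly_phi_atTop (p : ℝ[X]) :
    Tendsto (fun x => p.eval x * φ x) atTop (𝓝 0) := by
  have h := (tendsto_poly_exp_atTop p).const_mul (Real.sqrt (2 * π))⁻¹
  rw [mul_zero] at h
  refine h.congr fun x => ?_
  unfold φ; ring

lemma tendsto_poly_phi_atBot (p : ℝ[X]) :
    Tendsto (fun x => p.eval x * φ x) atBot (𝓝 0) := by
  have h := (tendsto_poly_exp_atBot p).const_mul (Real.sqrt (2 * π))⁻¹
  rw [mul_zero] at h
  refine h.congr fun x => ?_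
  unfold φ; ring

lemma stein (p : ℝ[X]) :
    ∫ x, x * p.eval x ∂γ = ∫ x, (derivative p).eval x ∂γ := by
  rw [integral_γ, integral_γ]
  have hderiv : ∀ x : ℝ, HasDerivAt (fun y => p.eval y * φ y)
      (((derivative p).eval x - x * p.eval x) * φ x) x := by
    intro x
    have h1 : HasDerivAt (fun y : ℝ => -(1/2) * y ^ 2) (-x) x := by
      have := (hasDerivAt_pow 2 x).const_mul (-(1/2) : ℝ)
      refine this.congr_deriv ?_
      push_cast; ring
    have h2 : HasDerivAt (fun y : ℝ => Real.exp (-(1/2) * y ^ 2))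
        (-x * Real.exp (-(1/2) * x ^ 2)) x := by
      have := h1.exp
      convert this using 1; ring
    have h3 : HasDerivAt φ (-x * φ x) x := by
      have := h2.const_mul (Real.sqrt (2 * π))⁻¹
      unfold φ
      exact this.congr_deriv (by ring)
    have h4 := (p.hasDerivAt x).mul h3
    exact h4.congr_deriv (by ring)
  have hint : Integrable (fun x => ((derivative p).eval x - x * p.eval x) * φ x) volume := by
    refine (integrable_poly_phi (derivative p - X * p)).congr
      (Filter.Eventually.of_forall fun x => ?_)
    simp only [eval_sub, eval_mul, eval_X]
  have hIic := integral_Iic_of_hasDerivAt_of_tendsto' (a := (0:ℝ))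
      (fun x _ => hderiv x) hint.integrableOn (tendsto_poly_phi_atBot p)
  have hIoi := integral_Ioi_of_hasDerivAt_of_tendsto' (a := (0:ℝ))
      (fun x _ => hderiv x) hint.integrableOn (tendsto_poly_phi_atTop p)
  have h0 : ∫ x, ((derivative p).eval x - x * p.eval x) * φ x = 0 := by
    rw [← intervalIntegral.integral_Iic_add_Ioi hint.integrableOn hint.integrableOn, hIic, hIoi]
    ring
  have hsplit : (fun x => ((derivative p).eval x - x * p.eval x) * φ x)
      = fun x => φ x * (derivative p).eval x - φ x * (x * p.eval x) := by
    funext x; ring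
  rw [hsplit] at h0
  have hi1 : Integrable (fun x => φ x * (derivative p).eval x) volume := by
    refine (integrable_poly_phi (derivative p)).congr
      (Filter.Eventually.of_forall fun x => mul_comm _ _)
  have hi2 : Integrable (fun x => φ x * (x * p.eval x)) volume := by
    refine (integrable_poly_phi (X * p)).congr (Filter.Eventually.of_forall fun x => ?_)
    simp only [eval_mul, eval_X]
    ring
  rw [integral_sub hi1 hi2] at h0
  linarith


noncomputable def J (p : ℝ[X]) : ℝ := ∫ x, p.eval x ∂γ

lemma J_add (p q : ℝ[X]) : J (p + q) = J p + J q := by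
  unfold J
  rw [← integral_add (integrable_poly p) (integrable_poly q)]
  congr 1; funext x; simp

lemma J_sub (p q : ℝ[X]) : J (p - q) = J p - J q := by
  unfold J
  rw [← integral_sub (integrable_poly p) (integrable_poly q)]
  congr 1; funext x; simp

lemma J_Cmul (c : ℝ) (p : ℝ[X]) : J (C c * p) = c * J p := by
  unfold J
  rw [← integral_const_mul]
  congr 1; funext x; simp

lemma J_zero : J 0 = 0 := by unfold J; simp

lemma J_one : J 1 = 1 := by unfold J; simp

lemma stein' (p : ℝ[X]) : J (X * p) = J (derivative p) := by
  unfold J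
  rw [← stein]
  congr 1; funext x; simp

lemma J_H (l : ℕ) : J (H l) = if l = 0 then 1 else 0 := by
  cases l with
  | zero => simp [H_zero, J_one]
  | succ m =>
    rw [H_succ, J_sub, stein']
    simp

lemma orth (k : ℕ) : ∀ l, J (H k * H l) = if k = l then (k.factorial : ℝ) else 0 := by
  induction k with
  | zero =>
    intro l
    rw [H_zero, one_mul, J_H]
    rcases eq_or_ne l 0 with h | h
    · subst h; simp
    · simp [h, Ne.symm h]
  | succ k ih =>
    intro l
    have h1 : H (k + 1) * H l = X * (H k * H l) - derivative (H k) * H l := by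
      rw [H_succ]; ring
    rw [h1, J_sub, stein', derivative_mul, J_add]
    have h2 : J (derivative (H k) * H l) + J (H k * derivative (H l))
        - J (derivative (H k) * H l) = J (H k * derivative (H l)) := by ring
    rw [h2]
    cases l with
    | zero =>
      rw [H_zero]
      simp [J_zero]
    | succ m =>
      rw [derivative_H]
      have h3 : H k * (C ((m:ℝ) + 1) * H m) = C ((m:ℝ) + 1) * (H k * H m) := by ring
      rw [h3, J_Cmul, ih m]
      rcases eq_or_ne k m with h | h
      · subst h
        simp [Nat.factorial_succ]
      · simp [h, fun hc => h (Nat.succ_injective hc)]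

lemma intYpoly (q : ℝ[X]) (a s : ℝ) : Integrable (fun y => q.eval (a + s * y)) γ := by
  have := integrable_poly (q.comp (C a + C s * X))
  refine this.congr (Filter.Eventually.of_forall fun y => ?_)
  simp [eval_comp]

lemma steinY (q : ℝ[X]) (a s : ℝ) :
    ∫ y, y * q.eval (a + s * y) ∂γ = s * ∫ y, (derivative q).eval (a + s * y) ∂γ := by
  have h := stein (q.comp (C a + C s * X))
  have hL : (fun y => y * (q.comp (C a + C s * X)).eval y)
      = fun y => y * q.eval (a + s * y) := by
    funext y; simp [eval_comp]
  have hR : (fun y => (derivative (q.comp (C a + C s * X))).eval y)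
      = fun y => s * (derivative q).eval (a + s * y) := by
    funext y
    rw [Polynomial.derivative_comp]
    simp [eval_comp]
  rw [hL, hR] at h
  rw [h, integral_const_mul]

lemma mehlerB (r s : ℝ) (hrs : r ^ 2 + s ^ 2 = 1) :
    ∀ l x, ∫ y, (H l).eval (r * x + s * y) ∂γ = r ^ l * (H l).eval x
  | 0, x => by simp [H_zero]
  | 1, x => by
    have hy : ∫ y, y ∂γ = 0 := by
      have h := stein 1
      simpa using h
    have h1 : Integrable (fun y : ℝ => r * x) γ := integrable_const _
    have h2 : Integrable (fun y : ℝ => s * y) γ := by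
      have := integrable_poly (C s * X)
      refine this.congr (Filter.Eventually.of_forall fun y => ?_)
      simp
    rw [H_one]
    simp only [eval_X]
    rw [integral_add h1 h2, integral_const, integral_const_mul, hy]
    simp
  | (n+2), x => by
    have hint1 : Integrable (fun y => (H (n+1)).eval (r * x + s * y)) γ := intYpoly _ _ _
    have hint2 : Integrable (fun y => y * (H (n+1)).eval (r * x + s * y)) γ := by
      have := integrable_poly (X * ((H (n+1)).comp (C (r * x) + C s * X)))
      refine this.congr (Filter.Eventually.of_forall fun y => ?_)
      simp [eval_comp]
    have hint3 : Integrable (fun y => (H n).eval (r * x + s * y)) γ := intYpoly _ _ _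
    have hD : ∫ y, y * (H (n+1)).eval (r * x + s * y) ∂γ
        = s * (((n:ℝ)+1) * ∫ y, (H n).eval (r * x + s * y) ∂γ) := by
      rw [steinY]
      congr 1
      rw [derivative_H]
      have he : (fun y => (C ((n:ℝ) + 1) * H n).eval (r * x + s * y))
          = fun y => ((n:ℝ) + 1) * (H n).eval (r * x + s * y) := by
        funext y; simp
      rw [he, integral_const_mul]
    have hIH1 := mehlerB r s hrs (n+1) x
    have hIH0 := mehlerB r s hrs n x
    calc ∫ y, (H (n+2)).eval (r * x + s * y) ∂γ
        = ∫ y, ((r * x) * (H (n+1)).eval (r * x + s * y)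
            + s * (y * (H (n+1)).eval (r * x + s * y))
            - ((n:ℝ)+1) * (H n).eval (r * x + s * y)) ∂γ := by
          congr 1; funext y; rw [H_two_step]; simp; ring
      _ = (r * x) * ∫ y, (H (n+1)).eval (r * x + s * y) ∂γ
            + s * ∫ y, y * (H (n+1)).eval (r * x + s * y) ∂γ
            - ((n:ℝ)+1) * ∫ y, (H n).eval (r * x + s * y) ∂γ := by
          have hadd : Integrable (fun y => r * x * (H (n+1)).eval (r * x + s * y)
              + s * (y * (H (n+1)).eval (r * x + s * y))) γ :=
            (hint1.const_mul _).add (hint2.const_mul _)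
          rw [integral_sub hadd (hint3.const_mul _),
            integral_add (hint1.const_mul _) (hint2.const_mul _),
            integral_const_mul, integral_const_mul, integral_const_mul]
      _ = r ^ (n+2) * (H (n+2)).eval x := by
          rw [hD, hIH1, hIH0, H_two_step]
          simp only [eval_sub, eval_mul, eval_X, eval_C]
          linear_combination (((n:ℝ)+1) * r ^ n * (H n).eval x) * hrs


lemma integrable_prod_poly (p q : ℝ[X]) (a b : ℝ) :
    Integrable (fun z : ℝ × ℝ => p.eval z.1 * q.eval (a * z.1 + b * z.2)) (γ.prod γ) := by
  have key : (fun z : ℝ × ℝ => p.eval z.1 * q.eval (a * z.1 + b * z.2))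
      = fun z : ℝ × ℝ => ∑ i ∈ Finset.range (q.natDegree + 1),
          ∑ j ∈ Finset.range (i + 1),
            (q.coeff i * a ^ j * b ^ (i - j) * (i.choose j : ℝ)) *
              ((p.eval z.1 * z.1 ^ j) * z.2 ^ (i - j)) := by
    funext z
    rw [Polynomial.eval_eq_sum_range (x := a * z.1 + b * z.2), Finset.mul_sum]
    refine Finset.sum_congr rfl fun i _ => ?_
    rw [add_pow, Finset.mul_sum, Finset.mul_sum]
    refine Finset.sum_congr rfl fun j hj => ?_
    rw [mul_pow, mul_pow]
    ring
  rw [key]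
  refine integrable_finset_sum _ fun i _ => integrable_finset_sum _ fun j _ => ?_
  have h1 : Integrable (fun x : ℝ => (p * X ^ j).eval x) γ := integrable_poly _
  have h2 : Integrable (fun y : ℝ => ((X : ℝ[X]) ^ (i - j)).eval y) γ := integrable_poly _
  have h3 := (h1.mul_prod h2).const_mul (q.coeff i * a ^ j * b ^ (i - j) * (i.choose j : ℝ))
  refine h3.congr (Filter.Eventually.of_forall fun z => ?_)
  simp

end MehlerAux

lemma hermiteFun_eq : ∀ (n : ℕ) (x : ℝ), hermiteFun n x = (MehlerAux.H n).eval x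
  | 0, x => by simp [hermiteFun, MehlerAux.H_zero]
  | 1, x => by simp [hermiteFun, MehlerAux.H_one]
  | (n+2), x => by
    simp only [hermiteFun]
    rw [hermiteFun_eq (n+1) x, hermiteFun_eq n x, MehlerAux.H_two_step]
    simp

theorem mehler_formula' {Ω : Type*} [MeasurableSpace Ω] (μ : Measure Ω) [IsProbabilityMeasure μ]
    (Z W : Ω → ℝ) (r : ℝ) (hr : r ∈ Set.Icc (-1 : ℝ) 1)
    (hgauss : Measure.map (fun ω => (Z ω, W ω)) μ =
      Measure.map (fun p : ℝ × ℝ => (p.1, r * p.1 + Real.sqrt (1 - r ^ 2) * p.2))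
        ((gaussianReal 0 1).prod (gaussianReal 0 1)))
    (k l : ℕ) :
    ∫ ω, hermiteFun k (Z ω) * hermiteFun l (W ω) ∂μ =
      (if k = l then r ^ k * (Nat.factorial k : ℝ) else 0) := by
  classical
  open MehlerAux in
  set s : ℝ := Real.sqrt (1 - r ^ 2) with hs
  have hs2 : s ^ 2 = 1 - r ^ 2 := Real.sq_sqrt (by nlinarith [hr.1, hr.2])
  have hrs : r ^ 2 + s ^ 2 = 1 := by rw [hs2]; ring
  have hγγ : ((gaussianReal 0 1).prod (gaussianReal 0 1)) = MehlerAux.γ.prod MehlerAux.γ := rfl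
  rw [hγγ] at hgauss
  set T : ℝ × ℝ → ℝ × ℝ := fun p => (p.1, r * p.1 + s * p.2) with hT
  have hTm : Measurable T :=
    measurable_fst.prodMk ((measurable_fst.const_mul r).add (measurable_snd.const_mul s))
  set F : ℝ × ℝ → ℝ := fun p => (MehlerAux.H k).eval p.1 * (MehlerAux.H l).eval p.2 with hF
  have hFc : Continuous F := by
    exact ((Polynomial.continuous _).comp continuous_fst).mul
      ((Polynomial.continuous _).comp continuous_snd)
  have hZW : AEMeasurable (fun ω => (Z ω, W ω)) μ := by
    by_contra hc
    rw [Measure.map_of_not_aemeasurable hc] at hgauss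
    have hmapT : IsProbabilityMeasure (Measure.map T (MehlerAux.γ.prod MehlerAux.γ)) :=
      Measure.isProbabilityMeasure_map hTm.aemeasurable
    have h1 := congrArg (fun m : Measure (ℝ × ℝ) => m Set.univ) hgauss
    simp only [Measure.coe_zero, Pi.zero_apply, measure_univ] at h1
    exact zero_ne_one h1
  calc ∫ ω, hermiteFun k (Z ω) * hermiteFun l (W ω) ∂μ
      = ∫ ω, F (Z ω, W ω) ∂μ := by
        refine integral_congr_ae (Filter.Eventually.of_forall fun ω => ?_)
        dsimp only
        rw [hermiteFun_eq, hermiteFun_eq]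
    _ = ∫ p, F p ∂(Measure.map (fun ω => (Z ω, W ω)) μ) :=
        (integral_map hZW hFc.aestronglyMeasurable).symm
    _ = ∫ p, F p ∂(Measure.map T (MehlerAux.γ.prod MehlerAux.γ)) := by rw [hgauss]
    _ = ∫ p, F (T p) ∂(MehlerAux.γ.prod MehlerAux.γ) :=
        integral_map hTm.aemeasurable hFc.aestronglyMeasurable
    _ = ∫ x, ∫ y, (MehlerAux.H k).eval x * (MehlerAux.H l).eval (r * x + s * y)
          ∂MehlerAux.γ ∂MehlerAux.γ := by
        rw [show (fun p => F (T p))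
            = fun z : ℝ × ℝ => (MehlerAux.H k).eval z.1
              * (MehlerAux.H l).eval (r * z.1 + s * z.2) from rfl]
        exact MeasureTheory.integral_prod _ (MehlerAux.integrable_prod_poly _ _ r s)
    _ = ∫ x, r ^ l * ((MehlerAux.H k * MehlerAux.H l).eval x) ∂MehlerAux.γ := by
        refine integral_congr_ae (Filter.Eventually.of_forall fun x => ?_)
        dsimp only
        rw [MeasureTheory.integral_const_mul, MehlerAux.mehlerB r s hrs l x]
        simp only [Polynomial.eval_mul]
        ring
    _ = r ^ l * MehlerAux.J (MehlerAux.H k * MehlerAux.H l) :=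
        MeasureTheory.integral_const_mul _ _
    _ = (if k = l then r ^ k * (Nat.factorial k : ℝ) else 0) := by
        rw [MehlerAux.orth]
        split_ifs with h
        · subst h; ring
        · ring


/-- Mehler's formula: if `(Z, W)` is a centered Gaussian vector in `ℝ²` with
`Var Z = Var W = 1` and `E[Z W] = r` (equivalently, `(Z,W)` is distributed as
`(X, r X + √(1-r²) Y)` for independent standard Gaussians `X, Y`), then
`E[H_k(Z) H_l(W)] = δ_{k,l} r^k k!`. -/
theorem mehler_formula {Ω : Type*} [MeasurableSpace Ω] (μ : Measure Ω) [IsProbabilityMeasure μ]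
    (Z W : Ω → ℝ) (r : ℝ) (hr : r ∈ Set.Icc (-1 : ℝ) 1)
    (hgauss : Measure.map (fun ω => (Z ω, W ω)) μ =
      Measure.map (fun p : ℝ × ℝ => (p.1, r * p.1 + Real.sqrt (1 - r ^ 2) * p.2))
        ((gaussianReal 0 1).prod (gaussianReal 0 1)))
    (k l : ℕ) :
    ∫ ω, hermiteFun k (Z ω) * hermiteFun l (W ω) ∂μ =
      (if k = l then r ^ k * (Nat.factorial k : ℝ) else 0) :=
  mehler_formula' μ Z W r hr hgauss k l
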